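/- Let ℓ ≥ 1 and let G be a finite simple graph together with two disjoint sets of vertices A and B with |A| = n ≥ ℓ and |B| = m ≥ ℓ, such that every edge of G joins a vertex of A to a vertex of B. Suppose there are no sets S ⊆ A and T ⊆ B with |S| = |T| = ℓ such that every vertex of S is adjacent to every vertex of T. Then the number of edges of G is at most (ℓ−1)^{1/ℓ} · (n−ℓ+1) · m^{1−1/ℓ} + (ℓ−1)m. -/

import Mathlib

open Finset

theorem kovari_sos_turan_bipartite {V : Type*} [Fintype V] [DecidableEq V]
    (G : SimpleGraph V) [DecidableRel G.Adj] (ℓ n m : ℕ) (hℓ : 1 ≤ ℓ)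
    (A B : Finset V) (hdisj : Disjoint A B)
    (hA : A.card = n) (hB : B.card = m) (hn : ℓ ≤ n) (hm : ℓ ≤ m)
    (hbip : ∀ u v : V, G.Adj u v → (u ∈ A ∧ v ∈ B) ∨ (u ∈ B ∧ v ∈ A))
    (hfree : ¬ ∃ S T : Finset V, S ⊆ A ∧ T ⊆ B ∧ S.card = ℓ ∧ T.card = ℓ ∧
        ∀ s ∈ S, ∀ t ∈ T, G.Adj s t) :
    (G.edgeFinset.card : ℝ) ≤
      (ℓ - 1 : ℝ) ^ ((1 : ℝ) / ℓ) * ((n : ℝ) - ℓ + 1) * (m : ℝ) ^ (1 - (1 : ℝ) / ℓ)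
        + (ℓ - 1 : ℝ) * m := by
  classical
  set d : V → ℕ := fun b => (A.filter fun a => G.Adj a b).card with hd
  -- Step 1 : edge count
  have hedge : G.edgeFinset.card = ∑ b ∈ B, d b := by
    have h1 : ∑ b ∈ B, d b = ((B ×ˢ A).filter fun p => G.Adj p.2 p.1).card := by
      rw [card_filter, Finset.sum_product]
      refine Finset.sum_congr rfl fun b _ => ?_
      rw [show d b = (A.filter fun a => G.Adj a b).card from rfl, card_filter]
    rw [h1]
    refine (Finset.card_bij (fun (p : V × V) _ => s(p.2, p.1)) ?_ ?_ ?_).symm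
    · rintro ⟨b, a⟩ hp
      simp only [mem_filter] at hp
      simp only [SimpleGraph.mem_edgeFinset, SimpleGraph.mem_edgeSet]
      exact hp.2
    · rintro ⟨b, a⟩ hp ⟨b', a'⟩ hp' he
      simp only [mem_filter, mem_product] at hp hp'
      rw [Sym2.eq_iff] at he
      rcases he with ⟨rfl, rfl⟩ | ⟨h1, h2⟩
      · rfl
      · subst h1; subst h2
        exact absurd hp'.1.1 (Finset.disjoint_left.mp hdisj hp.1.2)
    · intro e he
      induction e with
      | _ u v =>
        rw [SimpleGraph.mem_edgeFinset, SimpleGraph.mem_edgeSet] at he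
        rcases hbip u v he with ⟨hu, hv⟩ | ⟨hu, hv⟩
        · exact ⟨(v, u), by simp [mem_filter, hv, hu, he], rfl⟩
        · exact ⟨(u, v), by simp [mem_filter, hv, hu, he.symm], Sym2.eq_swap⟩
  -- Step 2 : key counting
  have hkey : ∑ b ∈ B, (d b).choose ℓ ≤ (ℓ - 1) * n.choose ℓ := by
    have h2 : ∀ b, (d b).choose ℓ =
        ((A.powersetCard ℓ).filter fun S => ∀ s ∈ S, G.Adj s b).card := by
      intro b
      rw [hd]
      simp only
      rw [← Finset.card_powersetCard]
      congr 1
      ext S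
      simp only [mem_powersetCard, mem_filter, Finset.subset_iff, mem_filter]
      constructor
      · rintro ⟨hsub, hcard⟩
        exact ⟨⟨fun x hx => (hsub hx).1, hcard⟩, fun s hs => (hsub hs).2⟩
      · rintro ⟨⟨hsub, hcard⟩, hadj⟩
        exact ⟨fun x hx => ⟨hsub hx, hadj x hx⟩, hcard⟩
    have h3 : ∑ b ∈ B, (d b).choose ℓ =
        ∑ S ∈ A.powersetCard ℓ, (B.filter fun b => ∀ s ∈ S, G.Adj s b).card := by
      simp only [h2, card_filter]
      exact Finset.sum_comm
    rw [h3]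
    calc ∑ S ∈ A.powersetCard ℓ, (B.filter fun b => ∀ s ∈ S, G.Adj s b).card
        ≤ ∑ _S ∈ A.powersetCard ℓ, (ℓ - 1) := by
          refine Finset.sum_le_sum fun S hS => ?_
          by_contra hcon
          push_neg at hcon
          have hcard : ℓ ≤ (B.filter fun b => ∀ s ∈ S, G.Adj s b).card := by omega
          obtain ⟨T, hTsub, hTcard⟩ := Finset.exists_subset_card_eq hcard
          rw [mem_powersetCard] at hS
          exact hfree ⟨S, T, hS.1, hTsub.trans (Finset.filter_subset _ _), hS.2, hTcard,
            fun s hs t ht => (Finset.mem_filter.mp (hTsub ht)).2 s hs⟩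
      _ = (ℓ - 1) * n.choose ℓ := by
          rw [Finset.sum_const, Finset.card_powersetCard, hA, smul_eq_mul, mul_comm]
  -- real setup
  have hℓR : (1 : ℝ) ≤ (ℓ : ℝ) := by exact_mod_cast hℓ
  have hnR : (ℓ : ℝ) ≤ (n : ℝ) := by exact_mod_cast hn
  have hmR : (ℓ : ℝ) ≤ (m : ℝ) := by exact_mod_cast hm
  have hn1 : (0 : ℝ) ≤ (n : ℝ) - ℓ + 1 := by linarith
  set x : V → ℝ := fun b => max ((d b : ℝ) - ℓ + 1) 0 with hx
  have hx0 : ∀ b, 0 ≤ x b := fun b => le_max_right _ _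
  -- Step 3 : pointwise inequality
  have hpt : ∀ b ∈ B, x b ^ ℓ * (n.choose ℓ : ℝ) ≤
      ((n : ℝ) - ℓ + 1) ^ ℓ * ((d b).choose ℓ : ℝ) := by
    intro b _
    have hdn : d b ≤ n := by
      rw [hd, ← hA]; exact Finset.card_le_card (Finset.filter_subset _ _)
    rcases lt_or_ge (d b) ℓ with hle | hge
    · have hxb : x b = 0 := by
        rw [hx]
        simp only [max_eq_right_iff]
        have : (d b : ℝ) + 1 ≤ (ℓ : ℝ) := by exact_mod_cast hle
        linarith
      rw [hxb, zero_pow (by omega), zero_mul]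
      positivity
    · -- d b ≥ ℓ : compare falling factorials
      have hxb : x b = (d b : ℝ) - ℓ + 1 := by
        rw [hx]
        have : (ℓ : ℝ) ≤ (d b : ℝ) := by exact_mod_cast hge
        simp only [max_eq_left_iff]
        linarith
      -- multiply by ℓ! and use descFactorial
      have hfac : (0 : ℝ) < (Nat.factorial ℓ : ℝ) := by exact_mod_cast ℓ.factorial_pos
      rw [← mul_le_mul_iff_of_pos_right hfac]
      have hcast : ∀ k : ℕ, ℓ ≤ k → ((k.choose ℓ : ℝ)) * (Nat.factorial ℓ : ℝ) =
          ∏ i ∈ Finset.range ℓ, ((k : ℝ) - i) := by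
        intro k hk
        have h1 : (k.descFactorial ℓ : ℝ) = (k.choose ℓ : ℝ) * (Nat.factorial ℓ : ℝ) := by
          rw [← Nat.cast_mul, Nat.descFactorial_eq_factorial_mul_choose, Nat.mul_comm]
        rw [← h1, Nat.descFactorial_eq_prod_range, Nat.cast_prod]
        refine Finset.prod_congr rfl fun i hi => ?_
        rw [Finset.mem_range] at hi
        rw [Nat.cast_sub (le_of_lt (lt_of_lt_of_le hi hk))]
      rw [mul_assoc, mul_assoc, hcast n (by omega), hcast (d b) hge, hxb]
      have e1 : ((d b : ℝ) - ℓ + 1) ^ ℓ * ∏ i ∈ Finset.range ℓ, ((n : ℝ) - i)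
          = ∏ i ∈ Finset.range ℓ, (((d b : ℝ) - ℓ + 1) * ((n : ℝ) - i)) := by
        rw [Finset.prod_mul_distrib, Finset.prod_const, card_range]
      have e2 : ((n : ℝ) - ℓ + 1) ^ ℓ * ∏ i ∈ Finset.range ℓ, ((d b : ℝ) - i)
          = ∏ i ∈ Finset.range ℓ, (((n : ℝ) - ℓ + 1) * ((d b : ℝ) - i)) := by
        rw [Finset.prod_mul_distrib, Finset.prod_const, card_range]
      rw [e1, e2]
      refine Finset.prod_le_prod (fun i hi => ?_) (fun i hi => ?_)
      · rw [Finset.mem_range] at hi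
        have h1 : (d b : ℝ) - ℓ + 1 ≥ 0 := by
          have : (ℓ : ℝ) ≤ (d b : ℝ) := by exact_mod_cast hge
          linarith
        have h2 : (i : ℝ) + 1 ≤ (n : ℝ) := by
          have : (i : ℝ) + 1 ≤ (ℓ : ℝ) := by exact_mod_cast hi
          linarith
        nlinarith
      · rw [Finset.mem_range] at hi
        have h1 : (i : ℝ) + 1 ≤ (ℓ : ℝ) := by exact_mod_cast hi
        have h2 : (d b : ℝ) ≤ (n : ℝ) := by exact_mod_cast hdn
        have h3 : (ℓ : ℝ) ≤ (d b : ℝ) := by exact_mod_cast hge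
        nlinarith
  -- Step 4 : sum of ℓ-th powers
  have hchoosepos : (0 : ℝ) < (n.choose ℓ : ℝ) := by
    exact_mod_cast Nat.choose_pos hn
  have hsum4 : ∑ b ∈ B, x b ^ ℓ ≤ ((ℓ : ℝ) - 1) * ((n : ℝ) - ℓ + 1) ^ ℓ := by
    rw [← mul_le_mul_iff_of_pos_right hchoosepos, Finset.sum_mul]
    calc ∑ b ∈ B, x b ^ ℓ * (n.choose ℓ : ℝ)
        ≤ ∑ b ∈ B, ((n : ℝ) - ℓ + 1) ^ ℓ * ((d b).choose ℓ : ℝ) :=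
          Finset.sum_le_sum hpt
      _ = ((n : ℝ) - ℓ + 1) ^ ℓ * ∑ b ∈ B, ((d b).choose ℓ : ℝ) := by
          rw [Finset.mul_sum]
      _ ≤ ((n : ℝ) - ℓ + 1) ^ ℓ * (((ℓ : ℝ) - 1) * (n.choose ℓ : ℝ)) := by
          refine mul_le_mul_of_nonneg_left ?_ (by positivity)
          have h1 : (∑ b ∈ B, ((d b).choose ℓ : ℝ)) ≤ (((ℓ - 1) * n.choose ℓ : ℕ) : ℝ) := by
            rw [← Nat.cast_sum]
            exact_mod_cast hkey
          rw [Nat.cast_mul, Nat.cast_sub hℓ] at h1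
          simpa using h1
      _ = ((ℓ : ℝ) - 1) * ((n : ℝ) - ℓ + 1) ^ ℓ * (n.choose ℓ : ℝ) := by ring
  -- Step 5 : power mean
  have hm0 : (0 : ℝ) < (m : ℝ) := by linarith
  have hpm : (∑ b ∈ B, x b) ^ ℓ ≤ (m : ℝ) ^ (ℓ - 1) * ∑ b ∈ B, x b ^ ℓ := by
    have := pow_sum_div_card_le_sum_pow (s := B) (f := x)
      (fun i _ => hx0 i) (ℓ - 1)
    rw [Nat.sub_add_cancel hℓ, hB] at this
    rw [div_le_iff₀ (by positivity)] at this
    linarith [this]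
  -- Step 6 : conclusion
  have hSx : ∑ b ∈ B, x b ≤
      (ℓ - 1 : ℝ) ^ ((1 : ℝ) / ℓ) * ((n : ℝ) - ℓ + 1) * (m : ℝ) ^ (1 - (1 : ℝ) / ℓ) := by
    have hR0 : (0 : ℝ) ≤
        (ℓ - 1 : ℝ) ^ ((1 : ℝ) / ℓ) * ((n : ℝ) - ℓ + 1) * (m : ℝ) ^ (1 - (1 : ℝ) / ℓ) := by
      have h1 : (0:ℝ) ≤ (ℓ - 1 : ℝ) ^ ((1 : ℝ) / ℓ) := Real.rpow_nonneg (by linarith) _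
      have h2 : (0:ℝ) ≤ (m : ℝ) ^ (1 - (1 : ℝ) / ℓ) := Real.rpow_nonneg (by linarith) _
      positivity
    have hℓne : (ℓ : ℝ) ≠ 0 := by linarith
    refine le_of_pow_le_pow_left₀ (n := ℓ) (by omega) hR0 ?_
    have hq1 : ((ℓ - 1 : ℝ) ^ ((1 : ℝ) / ℓ)) ^ ℓ = (ℓ : ℝ) - 1 := by
      rw [← Real.rpow_natCast ((ℓ - 1 : ℝ) ^ ((1 : ℝ) / ℓ)) ℓ,
        ← Real.rpow_mul (by linarith), one_div, inv_mul_cancel₀ hℓne, Real.rpow_one]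
    have hq2 : ((m : ℝ) ^ (1 - (1 : ℝ) / ℓ)) ^ ℓ = (m : ℝ) ^ (ℓ - 1) := by
      rw [← Real.rpow_natCast ((m : ℝ) ^ (1 - (1 : ℝ) / ℓ)) ℓ,
        ← Real.rpow_mul (by linarith)]
      have h5 : (1 - (1 : ℝ) / ℓ) * (ℓ : ℝ) = ((ℓ - 1 : ℕ) : ℝ) := by
        rw [Nat.cast_sub hℓ, Nat.cast_one]
        field_simp
      rw [h5, Real.rpow_natCast]
    rw [mul_pow, mul_pow, hq1, hq2]
    calc (∑ b ∈ B, x b) ^ ℓ ≤ (m : ℝ) ^ (ℓ - 1) * ∑ b ∈ B, x b ^ ℓ := hpm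
      _ ≤ (m : ℝ) ^ (ℓ - 1) * (((ℓ : ℝ) - 1) * ((n : ℝ) - ℓ + 1) ^ ℓ) :=
          mul_le_mul_of_nonneg_left hsum4 (by positivity)
      _ = ((ℓ : ℝ) - 1) * ((n : ℝ) - ℓ + 1) ^ ℓ * (m : ℝ) ^ (ℓ - 1) := by ring
  -- assemble
  have hE : (G.edgeFinset.card : ℝ) = ∑ b ∈ B, (d b : ℝ) := by
    rw [hedge]; push_cast; ring
  have hdx : ∀ b ∈ B, (d b : ℝ) ≤ x b + ((ℓ : ℝ) - 1) := by
    intro b _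
    have : (d b : ℝ) - ℓ + 1 ≤ x b := le_max_left _ _
    linarith
  calc (G.edgeFinset.card : ℝ) = ∑ b ∈ B, (d b : ℝ) := hE
    _ ≤ ∑ b ∈ B, (x b + ((ℓ : ℝ) - 1)) := Finset.sum_le_sum hdx
    _ = (∑ b ∈ B, x b) + ((ℓ : ℝ) - 1) * m := by
        rw [Finset.sum_add_distrib, Finset.sum_const, hB, nsmul_eq_mul, mul_comm]
    _ ≤ (ℓ - 1 : ℝ) ^ ((1 : ℝ) / ℓ) * ((n : ℝ) - ℓ + 1) * (m : ℝ) ^ (1 - (1 : ℝ) / ℓ)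
        + (ℓ - 1 : ℝ) * m := by
        have := hSx
        push_cast at this ⊢
        linarith
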